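/- For any measure π on path space, the energy I(π) = E_{γ∼π} E(γ) satisfies I(π) = sup_Π I^Π(π), where I^Π(π) = E_{γ∼π} E^Π(γ) and the supremum is over all finite partitions Π of [0,T]; here it is assumed π-almost every path is continuous. -/

import Mathlib

open Finset Set MeasureTheory ENNReal

/-- A finite partition `0 = t₀ < t₁ < ⋯ < t_n = T` of `[0,T]`. -/
structure TimePartition (T : ℝ) where
  n : ℕ
  npos : 0 < n
  t : ℕ → ℝ
  mono : ∀ i < n, t i < t (i + 1)
  first : t 0 = 0
  last : t n = T

/-- The energy of a path `γ` with respect to a partition: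
`E^Π(γ) = (1/2)∑ᵢ |γ(tᵢ)-γ(tᵢ₋₁)|²/(tᵢ-tᵢ₋₁)`. -/
noncomputable def partEnergy {T : ℝ} (γ : ℝ → ℝ) (P : TimePartition T) : ℝ :=
  (1 / 2) * ∑ i ∈ Finset.range P.n, (γ (P.t (i + 1)) - γ (P.t i)) ^ 2 / (P.t (i + 1) - P.t i)

/-- The energy of a path: `E(γ) = sup_Π E^Π(γ) ∈ [0,∞]`. -/
noncomputable def pathEnergy (T : ℝ) (γ : ℝ → ℝ) : ℝ≥0∞ :=
  ⨆ P : TimePartition T, ENNReal.ofReal (partEnergy γ P)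

/-- generic chain strict monotonicity -/
theorem chain_lt (t : ℕ → ℝ) {n : ℕ} (hmono : ∀ i < n, t i < t (i + 1))
    {i j : ℕ} (hij : i < j) (hj : j ≤ n) : t i < t j := by
  induction j with
  | zero => omega
  | succ j ih =>
    rcases Nat.lt_succ_iff_lt_or_eq.mp hij with h | h
    · exact (ih h (by omega)).trans (hmono j (by omega))
    · rw [← h]; exact hmono i (by omega)

namespace TimePartition

variable {T : ℝ} (P : TimePartition T)

theorem t_lt {i j : ℕ} (hij : i < j) (hj : j ≤ P.n) : P.t i < P.t j :=
  chain_lt P.t P.mono hij hj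

theorem t_le {i j : ℕ} (hij : i ≤ j) (hj : j ≤ P.n) : P.t i ≤ P.t j := by
  rcases eq_or_lt_of_le hij with h | h
  · exact le_of_eq (by rw [h])
  · exact (P.t_lt h hj).le

theorem lt_of_t_lt {i j : ℕ} (hi : i ≤ P.n) (h : P.t i < P.t j) : i < j := by
  by_contra hc
  exact absurd (P.t_le (by omega) hi) (not_le.mpr h)

theorem eq_of_t_eq {i j : ℕ} (hi : i ≤ P.n) (hj : j ≤ P.n) (h : P.t i = P.t j) : i = j := by
  by_contra hc
  rcases Nat.lt_or_ge i j with hlt | hge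
  · exact absurd h (ne_of_lt (P.t_lt hlt hj))
  · have : i ≠ j := hc
    exact absurd h.symm (ne_of_lt (P.t_lt (by omega) hi))

theorem t_mem_Icc {i : ℕ} (hi : i ≤ P.n) : P.t i ∈ Icc (0:ℝ) T := by
  constructor
  · have h := P.t_le (Nat.zero_le i) hi
    rwa [P.first] at h
  · have h := P.t_le hi le_rfl
    rwa [P.last] at h

end TimePartition

noncomputable def energySum (γ : ℝ → ℝ) (t : ℕ → ℝ) (n : ℕ) : ℝ :=
  ∑ i ∈ Finset.range n, (γ (t (i + 1)) - γ (t i)) ^ 2 / (t (i + 1) - t i)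

theorem partEnergy_eq {T : ℝ} (γ : ℝ → ℝ) (P : TimePartition T) :
    partEnergy γ P = (1 / 2) * energySum γ P.t P.n := rfl

theorem sq_div_add (a b s u : ℝ) (hs : 0 < s) (hu : 0 < u) :
    (a + b) ^ 2 / (s + u) ≤ a ^ 2 / s + b ^ 2 / u := by
  rw [div_add_div _ _ (ne_of_gt hs) (ne_of_gt hu), div_le_div_iff₀ (by positivity) (by positivity)]
  nlinarith [sq_nonneg (a * u - b * s), mul_pos hs hu]

theorem le_energySum (γ : ℝ → ℝ) (t : ℕ → ℝ) {n : ℕ} (hn : 0 < n)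
    (hmono : ∀ i < n, t i < t (i + 1)) :
    (γ (t n) - γ (t 0)) ^ 2 / (t n - t 0) ≤ energySum γ t n := by
  induction n with
  | zero => omega
  | succ n ih =>
    rcases Nat.eq_zero_or_pos n with h | h
    · subst h; simp [energySum]
    · have h0n : t 0 < t n := chain_lt t hmono h (by omega)
      have hnn : t n < t (n + 1) := hmono n (by omega)
      have hcs := sq_div_add (γ (t n) - γ (t 0)) (γ (t (n + 1)) - γ (t n))
        (t n - t 0) (t (n + 1) - t n) (by linarith) (by linarith)
      have he : (γ (t n) - γ (t 0)) + (γ (t (n + 1)) - γ (t n)) = γ (t (n + 1)) - γ (t 0) := by ring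
      have hs : (t n - t 0) + (t (n + 1) - t n) = t (n + 1) - t 0 := by ring
      rw [he, hs] at hcs
      have hih := ih h (fun i hi => hmono i (by omega))
      rw [energySum, Finset.sum_range_succ]
      rw [energySum] at hih
      linarith

theorem energySum_le_refine {T : ℝ} (γ : ℝ → ℝ) (P R : TimePartition T)
    (h : ∀ i ≤ P.n, ∃ j ≤ R.n, R.t j = P.t i) :
    energySum γ P.t P.n ≤ energySum γ R.t R.n := by
  have h' : ∀ i : ℕ, ∃ j : ℕ, i ≤ P.n → j ≤ R.n ∧ R.t j = P.t i := by
    intro i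
    by_cases hi : i ≤ P.n
    · obtain ⟨j, hj, hje⟩ := h i hi
      exact ⟨j, fun _ => ⟨hj, hje⟩⟩
    · exact ⟨0, fun hi' => absurd hi' hi⟩
  choose φ hφ using h'
  have hφn : ∀ i ≤ P.n, φ i ≤ R.n := fun i hi => (hφ i hi).1
  have hφt : ∀ i ≤ P.n, R.t (φ i) = P.t i := fun i hi => (hφ i hi).2
  have hφmono : ∀ i < P.n, φ i < φ (i + 1) := by
    intro i hi
    apply R.lt_of_t_lt (hφn i (by omega))
    rw [hφt i (by omega), hφt (i + 1) (by omega)]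
    exact P.mono i hi
  have hφ0 : φ 0 = 0 := by
    apply R.eq_of_t_eq (hφn 0 (by omega)) (Nat.zero_le _)
    rw [hφt 0 (by omega), P.first, R.first]
  have hφlast : φ P.n = R.n := by
    apply R.eq_of_t_eq (hφn P.n le_rfl) le_rfl
    rw [hφt P.n le_rfl, P.last, R.last]
  set f : ℕ → ℝ := fun j => (γ (R.t (j + 1)) - γ (R.t j)) ^ 2 / (R.t (j + 1) - R.t j) with hf
  have hsplit : ∀ k ≤ P.n, ∑ j ∈ Finset.range (φ k), f j
      = ∑ i ∈ Finset.range k, ∑ j ∈ Finset.Ico (φ i) (φ (i + 1)), f j := by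
    intro k hk
    induction k with
    | zero => simp [hφ0]
    | succ k ih =>
      rw [Finset.sum_range_succ, ← ih (by omega), Finset.range_eq_Ico]
      rw [Finset.range_eq_Ico]
      exact (Finset.sum_Ico_consecutive f (Nat.zero_le (φ k)) (hφmono k (by omega)).le).symm
  have hblock : ∀ i < P.n,
      (γ (P.t (i + 1)) - γ (P.t i)) ^ 2 / (P.t (i + 1) - P.t i)
        ≤ ∑ j ∈ Finset.Ico (φ i) (φ (i + 1)), f j := by
    intro i hi
    set u : ℕ → ℝ := fun j => R.t (φ i + j) with hu
    set m : ℕ := φ (i + 1) - φ i with hm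
    have hmpos : 0 < m := by have := hφmono i hi; omega
    have humono : ∀ j < m, u j < u (j + 1) := by
      intro j hj
      have h1 : φ i + j < R.n := by
        have := hφn (i + 1) (by omega); have := hφmono i hi; omega
      have := R.mono (φ i + j) h1
      simpa [hu, Nat.add_assoc] using this
    have hkey := le_energySum γ u hmpos humono
    have hu0 : u 0 = P.t i := by simp [hu, hφt i (by omega)]
    have hum : u m = P.t (i + 1) := by
      have : φ i + m = φ (i + 1) := by have := hφmono i hi; omega
      simp [hu, this, hφt (i + 1) (by omega)]
    have hsum : energySum γ u m = ∑ j ∈ Finset.Ico (φ i) (φ (i + 1)), f j := by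
      rw [Finset.sum_Ico_eq_sum_range]
      have : φ (i + 1) - φ i = m := rfl
      rw [this, energySum]
      apply Finset.sum_congr rfl
      intro j _
      simp [hf, hu, Nat.add_assoc]
    rw [hu0, hum, hsum] at hkey
    exact hkey
  calc energySum γ P.t P.n
      ≤ ∑ i ∈ Finset.range P.n, ∑ j ∈ Finset.Ico (φ i) (φ (i + 1)), f j := by
        apply Finset.sum_le_sum
        intro i hi
        exact hblock i (Finset.mem_range.mp hi)
    _ = ∑ j ∈ Finset.range (φ P.n), f j := (hsplit P.n le_rfl).symm
    _ = energySum γ R.t R.n := by rw [hφlast]; rfl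

theorem partEnergy_le_refine {T : ℝ} (γ : ℝ → ℝ) (P R : TimePartition T)
    (h : ∀ i ≤ P.n, ∃ j ≤ R.n, R.t j = P.t i) :
    partEnergy γ P ≤ partEnergy γ R := by
  rw [partEnergy_eq, partEnergy_eq]
  have := energySum_le_refine γ P R h
  linarith

theorem partEnergy_eq_of_same_points {T : ℝ} (γ : ℝ → ℝ) (P R : TimePartition T)
    (h1 : ∀ i ≤ P.n, ∃ j ≤ R.n, R.t j = P.t i)
    (h2 : ∀ j ≤ R.n, ∃ i ≤ P.n, P.t i = R.t j) :
    partEnergy γ P = partEnergy γ R :=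
  le_antisymm (partEnergy_le_refine γ P R h1) (partEnergy_le_refine γ R P h2)

noncomputable def partitionOfFinset (T : ℝ) (hT : 0 < T) (S : Finset ℝ)
    (h0 : (0:ℝ) ∈ S) (hTm : T ∈ S) (hS : ∀ x ∈ S, x ∈ Icc (0:ℝ) T) : TimePartition T where
  n := S.card - 1
  npos := by
    have : 1 < S.card := Finset.one_lt_card.mpr ⟨0, h0, T, hTm, by linarith⟩
    omega
  t := fun i => if h : i < S.card then (S.orderIsoOfFin rfl ⟨i, h⟩ : ℝ) else T
  mono := by
    intro i hi
    have hcard : 1 < S.card := Finset.one_lt_card.mpr ⟨0, h0, T, hTm, by linarith⟩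
    have h1 : i < S.card := by omega
    have h2 : i + 1 < S.card := by omega
    simp only [dif_pos h1, dif_pos h2]
    exact_mod_cast (S.orderIsoOfFin rfl).strictMono (by exact Fin.mk_lt_mk.mpr (by omega))
  first := by
    have hcard : 1 < S.card := Finset.one_lt_card.mpr ⟨0, h0, T, hTm, by linarith⟩
    have h1 : 0 < S.card := by omega
    simp only [dif_pos h1]
    set e := S.orderIsoOfFin rfl
    obtain ⟨k, hk⟩ := e.surjective ⟨0, h0⟩
    have hle : e ⟨0, h1⟩ ≤ e k := e.monotone (by exact Fin.mk_le_mk.mpr (Nat.zero_le _))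
    have hge : (0:ℝ) ≤ (e ⟨0, h1⟩ : ℝ) := (hS _ (e ⟨0, h1⟩).2).1
    have hle' : (e ⟨0, h1⟩ : ℝ) ≤ 0 := by rw [hk] at hle; exact_mod_cast hle
    linarith
  last := by
    have hcard : 1 < S.card := Finset.one_lt_card.mpr ⟨0, h0, T, hTm, by linarith⟩
    have h1 : S.card - 1 < S.card := by omega
    simp only [dif_pos h1]
    set e := S.orderIsoOfFin rfl
    obtain ⟨k, hk⟩ := e.surjective ⟨T, hTm⟩
    have hle : e k ≤ e ⟨S.card - 1, h1⟩ := e.monotone (by exact Fin.mk_le_mk.mpr (by omega))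
    have hge : (e ⟨S.card - 1, h1⟩ : ℝ) ≤ T := (hS _ (e ⟨S.card - 1, h1⟩).2).2
    have hle' : T ≤ (e ⟨S.card - 1, h1⟩ : ℝ) := by rw [hk] at hle; exact_mod_cast hle
    linarith

theorem partitionOfFinset_points (T : ℝ) (hT : 0 < T) (S : Finset ℝ)
    (h0 : (0:ℝ) ∈ S) (hTm : T ∈ S) (hS : ∀ x ∈ S, x ∈ Icc (0:ℝ) T) (x : ℝ) :
    (∃ j ≤ (partitionOfFinset T hT S h0 hTm hS).n, (partitionOfFinset T hT S h0 hTm hS).t j = x)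
      ↔ x ∈ S := by
  set Q := partitionOfFinset T hT S h0 hTm hS with hQ
  have hcard : 1 < S.card := Finset.one_lt_card.mpr ⟨0, h0, T, hTm, by linarith⟩
  have hn : Q.n = S.card - 1 := rfl
  constructor
  · rintro ⟨j, hj, rfl⟩
    have hjc : j < S.card := by omega
    show (if h : j < S.card then (S.orderIsoOfFin rfl ⟨j, h⟩ : ℝ) else T) ∈ S
    rw [dif_pos hjc]
    exact (S.orderIsoOfFin rfl ⟨j, hjc⟩).2
  · intro hx
    obtain ⟨k, hk⟩ := (S.orderIsoOfFin rfl).surjective ⟨x, hx⟩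
    refine ⟨k.val, by omega, ?_⟩
    show (if h : k.val < S.card then (S.orderIsoOfFin rfl ⟨k.val, h⟩ : ℝ) else T) = x
    rw [dif_pos k.isLt]
    simp only [Fin.eta]
    exact congrArg Subtype.val hk

open Classical in
noncomputable def cleanF (T : ℝ) (s : Finset ℚ) : Finset ℝ :=
  insert 0 (insert T ((Finset.image (fun q : ℚ => (q : ℝ)) s).filter (fun x => 0 < x ∧ x < T)))

theorem zero_mem_cleanF (T : ℝ) (s : Finset ℚ) : (0:ℝ) ∈ cleanF T s :=
  Finset.mem_insert_self _ _

theorem T_mem_cleanF (T : ℝ) (s : Finset ℚ) : T ∈ cleanF T s :=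
  Finset.mem_insert_of_mem (Finset.mem_insert_self _ _)

theorem cleanF_subset_Icc (T : ℝ) (hT : 0 < T) (s : Finset ℚ) :
    ∀ x ∈ cleanF T s, x ∈ Icc (0:ℝ) T := by
  intro x hx
  rcases Finset.mem_insert.mp hx with rfl | hx
  · exact ⟨le_rfl, hT.le⟩
  rcases Finset.mem_insert.mp hx with rfl | hx
  · exact ⟨hT.le, le_rfl⟩
  · obtain ⟨-, h1, h2⟩ := Finset.mem_filter.mp hx
    exact ⟨h1.le, h2.le⟩

theorem cleanF_mono (T : ℝ) {s s' : Finset ℚ} (h : s ⊆ s') :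
    cleanF T s ⊆ cleanF T s' := by
  classical
  apply Finset.insert_subset_insert
  apply Finset.insert_subset_insert
  intro x hx
  rw [Finset.mem_filter] at hx ⊢
  refine ⟨?_, hx.2⟩
  rw [Finset.mem_image] at hx ⊢
  obtain ⟨q, hq, rfl⟩ := hx.1
  exact ⟨q, h hq, rfl⟩

noncomputable def ratPartition (T : ℝ) (hT : 0 < T) (s : Finset ℚ) : TimePartition T :=
  partitionOfFinset T hT (cleanF T s) (zero_mem_cleanF T s) (T_mem_cleanF T s)
    (cleanF_subset_Icc T hT s)

theorem ratPartition_points (T : ℝ) (hT : 0 < T) (s : Finset ℚ) (x : ℝ) :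
    (∃ j ≤ (ratPartition T hT s).n, (ratPartition T hT s).t j = x) ↔ x ∈ cleanF T s :=
  partitionOfFinset_points T hT _ _ _ _ x

theorem ratPartition_le_union (T : ℝ) (hT : 0 < T) (s s' : Finset ℚ) (hss : s ⊆ s')
    (γ : ℝ → ℝ) : partEnergy γ (ratPartition T hT s) ≤ partEnergy γ (ratPartition T hT s') := by
  apply partEnergy_le_refine
  intro i hi
  have hx : (ratPartition T hT s).t i ∈ cleanF T s' :=
    cleanF_mono T hss ((ratPartition_points T hT s _).mp ⟨i, hi, rfl⟩)
  exact (ratPartition_points T hT s' _).mpr hx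

theorem measurable_partEnergy {T : ℝ} (P : TimePartition T) :
    Measurable fun γ : ℝ → ℝ => partEnergy γ P := by
  apply Measurable.const_mul
  apply Finset.measurable_sum
  intro i _
  exact Measurable.div_const
    (Measurable.pow_const
      ((measurable_pi_apply (P.t (i + 1))).sub (measurable_pi_apply (P.t i))) 2) _

theorem pathEnergy_eq_ratSup (T : ℝ) (hT : 0 < T) (γ : ℝ → ℝ)
    (hγ : ContinuousOn γ (Icc 0 T)) :
    pathEnergy T γ = ⨆ s : Finset ℚ, ENNReal.ofReal (partEnergy γ (ratPartition T hT s)) := by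
  classical
  refine le_antisymm (iSup_le fun P => ?_)
    (iSup_le fun s => le_iSup (fun P : TimePartition T => ENNReal.ofReal (partEnergy γ P))
      (ratPartition T hT s))
  -- choose rational approximations of interior points
  have hex : ∀ i k : ℕ, ∃ qr : ℚ, 1 ≤ i → i < P.n →
      P.t i < (qr : ℝ) ∧ (qr : ℝ) < min (P.t (i + 1)) (P.t i + 1 / (k + 1)) := by
    intro i k
    by_cases h : 1 ≤ i ∧ i < P.n
    · have hpos : (0:ℝ) < 1 / (k + 1) := by positivity
      have h1 : P.t i < min (P.t (i + 1)) (P.t i + 1 / (k + 1)) :=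
        lt_min (P.mono i h.2) (by linarith)
      obtain ⟨qr, hq1, hq2⟩ := exists_rat_btwn h1
      exact ⟨qr, fun _ _ => ⟨hq1, hq2⟩⟩
    · exact ⟨0, fun h1 h2 => absurd ⟨h1, h2⟩ h⟩
  choose q hq using hex
  -- basic bounds for interior points
  have hql : ∀ i k, 1 ≤ i → i < P.n → P.t i < (q i k : ℝ) :=
    fun i k h1 h2 => (hq i k h1 h2).1
  have hqu : ∀ i k, 1 ≤ i → i < P.n → (q i k : ℝ) < P.t (i + 1) :=
    fun i k h1 h2 => lt_of_lt_of_le (hq i k h1 h2).2 (min_le_left _ _)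
  have hqu' : ∀ i k, 1 ≤ i → i < P.n → (q i k : ℝ) < P.t i + 1 / (k + 1) :=
    fun i k h1 h2 => lt_of_lt_of_le (hq i k h1 h2).2 (min_le_right _ _)
  have hq0 : ∀ i k, 1 ≤ i → i < P.n → (0:ℝ) < (q i k : ℝ) := by
    intro i k h1 h2
    have := P.t_lt (show 0 < i by omega) (by omega)
    rw [P.first] at this
    linarith [hql i k h1 h2]
  have hqT : ∀ i k, 1 ≤ i → i < P.n → (q i k : ℝ) < T := by
    intro i k h1 h2
    have h3 : P.t (i + 1) ≤ P.t P.n := P.t_le (by omega) le_rfl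
    rw [P.last] at h3
    linarith [hqu i k h1 h2]
  -- the perturbed partition
  set tk : ℕ → ℕ → ℝ := fun k i => if i = 0 then 0 else if i < P.n then (q i k : ℝ) else T
    with htk
  have htk0 : ∀ k, tk k 0 = 0 := fun k => rfl
  have htkn : ∀ k, tk k P.n = T := by
    intro k
    have h1 : P.n ≠ 0 := by have := P.npos; omega
    simp [htk, h1]
  have htkmid : ∀ k i, 1 ≤ i → i < P.n → tk k i = (q i k : ℝ) := by
    intro k i h1 h2
    simp [htk, show i ≠ 0 by omega, h2]
  have htkmono : ∀ k, ∀ i < P.n, tk k i < tk k (i + 1) := by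
    intro k i hi
    rcases Nat.eq_zero_or_pos i with rfl | h1
    · rw [htk0 k]
      rcases Nat.lt_or_ge 1 P.n with h2 | h2
      · rw [htkmid k 1 le_rfl h2]
        exact hq0 1 k le_rfl h2
      · have hn1 : P.n = 1 := by have := P.npos; omega
        have : tk k 1 = T := by rw [← hn1] at *; exact htkn k
        rw [this]; exact hT
    · rcases Nat.lt_or_ge (i + 1) P.n with h2 | h2
      · rw [htkmid k i h1 hi, htkmid k (i + 1) (by omega) h2]
        exact lt_trans (hqu i k h1 hi) (hql (i + 1) k (by omega) h2)
      · have hi1 : i + 1 = P.n := by omega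
        rw [htkmid k i h1 hi, hi1, htkn k]
        have := hqu i k h1 hi
        rw [hi1, P.last] at this
        exact this
  set Pk : ℕ → TimePartition T := fun k =>
    ⟨P.n, P.npos, tk k, htkmono k, htk0 k, htkn k⟩ with hPk
  set sk : ℕ → Finset ℚ := fun k => (Finset.Ico 1 P.n).image (fun i => q i k) with hsk
  -- the point sets agree
  have hPkt : ∀ k i, (Pk k).t i = tk k i := fun _ _ => rfl
  have hPkn : ∀ k, (Pk k).n = P.n := fun _ => rfl
  have hpts : ∀ k, partEnergy γ (ratPartition T hT (sk k)) = partEnergy γ (Pk k) := by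
    intro k
    apply partEnergy_eq_of_same_points γ (ratPartition T hT (sk k)) (Pk k)
    · -- points of ratPartition are points of Pk
      intro j hj
      have hx : (ratPartition T hT (sk k)).t j ∈ cleanF T (sk k) :=
        (ratPartition_points T hT (sk k) _).mp ⟨j, hj, rfl⟩
      set x := (ratPartition T hT (sk k)).t j with hxd
      rcases Finset.mem_insert.mp hx with h0 | hx
      · exact ⟨0, Nat.zero_le _, by rw [hPkt, htk0 k, h0]⟩
      rcases Finset.mem_insert.mp hx with h0 | hx
      · exact ⟨P.n, le_of_eq (hPkn k).symm, by rw [hPkt, htkn k, h0]⟩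
      · obtain ⟨hmem, hb1, hb2⟩ := Finset.mem_filter.mp hx
        obtain ⟨r, hr, hrx⟩ := Finset.mem_image.mp hmem
        obtain ⟨i, hi, hir⟩ := Finset.mem_image.mp hr
        obtain ⟨hi1, hi2⟩ := Finset.mem_Ico.mp hi
        refine ⟨i, by rw [hPkn]; omega, ?_⟩
        rw [hPkt, htkmid k i hi1 hi2, ← hrx, hir]
    · -- points of Pk are points of ratPartition
      intro i hi
      rw [hPkn] at hi
      rw [hPkt]
      apply (ratPartition_points T hT (sk k) _).mpr
      rcases Nat.eq_zero_or_pos i with rfl | h1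
      · rw [htk0 k]; exact zero_mem_cleanF T _
      rcases Nat.lt_or_ge i P.n with h2 | h2
      · rw [htkmid k i h1 h2]
        apply Finset.mem_insert_of_mem
        apply Finset.mem_insert_of_mem
        refine Finset.mem_filter.mpr ⟨?_, hq0 i k h1 h2, hqT i k h1 h2⟩
        exact Finset.mem_image.mpr ⟨q i k, Finset.mem_image.mpr
          ⟨i, Finset.mem_Ico.mpr ⟨h1, h2⟩, rfl⟩, rfl⟩
      · have : i = P.n := by omega
        rw [this, htkn k]; exact T_mem_cleanF T _
  -- columns converge to the original points
  have htkIcc : ∀ k i, i ≤ P.n → tk k i ∈ Icc (0:ℝ) T := by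
    intro k i hi
    rcases Nat.eq_zero_or_pos i with rfl | h1
    · rw [htk0 k]; exact ⟨le_rfl, hT.le⟩
    rcases Nat.lt_or_ge i P.n with h2 | h2
    · rw [htkmid k i h1 h2]
      exact ⟨(hq0 i k h1 h2).le, (hqT i k h1 h2).le⟩
    · have : i = P.n := by omega
      rw [this, htkn k]; exact ⟨hT.le, le_rfl⟩
  have htend : ∀ i ≤ P.n, Filter.Tendsto (fun k => tk k i) Filter.atTop (nhds (P.t i)) := by
    intro i hi
    rcases Nat.eq_zero_or_pos i with rfl | h1
    · simp only [htk0, P.first]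
      exact tendsto_const_nhds
    rcases Nat.lt_or_ge i P.n with h2 | h2
    · have hub : Filter.Tendsto (fun k : ℕ => P.t i + 1 / (k + 1)) Filter.atTop
          (nhds (P.t i)) := by
        have := tendsto_const_nhds (x := P.t i) (f := Filter.atTop (α := ℕ)) |>.add
          tendsto_one_div_add_atTop_nhds_zero_nat
        simpa using this
      refine tendsto_of_tendsto_of_tendsto_of_le_of_le tendsto_const_nhds hub ?_ ?_
      · intro k
        show P.t i ≤ tk k i
        rw [htkmid k i h1 h2]; exact (hql i k h1 h2).le
      · intro k
        show tk k i ≤ P.t i + 1 / (k + 1)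
        rw [htkmid k i h1 h2]; exact (hqu' i k h1 h2).le
    · have : i = P.n := by omega
      subst this
      simp only [htkn, P.last]
      exact tendsto_const_nhds
  have hγtend : ∀ i ≤ P.n, Filter.Tendsto (fun k => γ (tk k i)) Filter.atTop
      (nhds (γ (P.t i))) := by
    intro i hi
    have hcw : ContinuousWithinAt γ (Icc 0 T) (P.t i) := hγ (P.t i) (P.t_mem_Icc hi)
    refine hcw.tendsto.comp ?_
    rw [tendsto_nhdsWithin_iff]
    exact ⟨htend i hi, Filter.Eventually.of_forall fun k => htkIcc k i hi⟩
  -- convergence of energies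
  have hconv : Filter.Tendsto (fun k => partEnergy γ (Pk k)) Filter.atTop
      (nhds (partEnergy γ P)) := by
    simp only [partEnergy]
    apply Filter.Tendsto.const_mul
    apply tendsto_finset_sum
    intro i hi
    have hi' : i < P.n := Finset.mem_range.mp hi
    have hne : P.t (i + 1) - P.t i ≠ 0 := by
      have := P.mono i hi'; linarith
    exact Filter.Tendsto.div
      ((((hγtend (i + 1) (by omega)).sub (hγtend i (by omega))).pow 2))
      ((htend (i + 1) (by omega)).sub (htend i (by omega))) hne
  -- conclude
  have hconv' : Filter.Tendsto (fun k => ENNReal.ofReal (partEnergy γ (Pk k))) Filter.atTop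
      (nhds (ENNReal.ofReal (partEnergy γ P))) :=
    (ENNReal.continuous_ofReal.tendsto _).comp hconv
  refine le_of_tendsto' hconv' fun k => ?_
  rw [← hpts k]
  exact le_iSup (fun s : Finset ℚ => ENNReal.ofReal (partEnergy γ (ratPartition T hT s))) (sk k)

/-- For a probability measure `π` on path space whose paths are a.e. continuous,
the energy `I(π) = E_{γ∼π} E(γ)` equals the supremum over finite partitions `Π`
of the approximate energies `I^Π(π) = E_{γ∼π} E^Π(γ)`. -/
theorem energy_eq_iSup_partition_energy (T : ℝ) (hT : 0 < T)
    (π : Measure (ℝ → ℝ)) [IsProbabilityMeasure π]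
    (hcont : ∀ᵐ γ ∂π, ContinuousOn γ (Icc 0 T))
    (hrange : ∀ᵐ γ ∂π, ∀ t ∈ Icc (0 : ℝ) T, γ t ∈ Icc (0 : ℝ) 1) :
    ∫⁻ γ, pathEnergy T γ ∂π
      = ⨆ P : TimePartition T, ∫⁻ γ, ENNReal.ofReal (partEnergy γ P) ∂π := by
  have key : ∫⁻ γ, pathEnergy T γ ∂π
      = ⨆ s : Finset ℚ, ∫⁻ γ, ENNReal.ofReal (partEnergy γ (ratPartition T hT s)) ∂π := by
    rw [← MeasureTheory.lintegral_iSup_directed]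
    · apply lintegral_congr_ae
      filter_upwards [hcont] with γ hγ
      exact pathEnergy_eq_ratSup T hT γ hγ
    · intro s
      exact ((measurable_partEnergy _).ennreal_ofReal).aemeasurable
    · intro s s'
      refine ⟨s ∪ s', fun γ => ?_, fun γ => ?_⟩
      · exact ENNReal.ofReal_le_ofReal
          (ratPartition_le_union T hT s (s ∪ s') Finset.subset_union_left γ)
      · exact ENNReal.ofReal_le_ofReal
          (ratPartition_le_union T hT s' (s ∪ s') Finset.subset_union_right γ)
  apply le_antisymm
  · rw [key]
    exact iSup_le fun s => le_iSup_of_le (ratPartition T hT s) le_rfl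
  · exact iSup_le fun P => lintegral_mono fun γ =>
      le_iSup (fun P : TimePartition T => ENNReal.ofReal (partEnergy γ P)) P
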